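/- (Antisymmetry axiom [,]∘⟨,⟩ = 0 for (sl_{n+1}^+)_q.) For all indices 1 ≤ a < i < b < j ≤ n+1, the q-bracket [e_{ib}, e_{aj}]_q equals 0 in L = (sl_{n+1}^+)_q; consequently the composite of the pseudobracket ⟨,⟩ (given on basis pairs e_{ab} < e_{ij} by ⟨e_{ab}, e_{ij}⟩ = (q − q^{−1}) e_{ib} ⊗ e_{aj} if a < i < b < j and 0 otherwise) with the bracket [,]_q is the zero map. -/

import Mathlib

open Finsupp TensorProduct

/-- Index pairs `1 ≤ i < j ≤ n+1`, modeled 0-based as pairs in `Fin (n+1)`. -/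
abbrev Idx (n : ℕ) := {p : Fin (n + 1) × Fin (n + 1) // p.1 < p.2}

/-- The total order on index pairs: `e_{ab} < e_{ij}` iff `a+b < i+j`, or
(`a+b = i+j` and `b < j`). -/
def idxLt {n : ℕ} (x y : Idx n) : Prop :=
  x.1.1.val + x.1.2.val < y.1.1.val + y.1.2.val ∨
    (x.1.1.val + x.1.2.val = y.1.1.val + y.1.2.val ∧ x.1.2.val < y.1.2.val)

instance {n : ℕ} : DecidableRel (idxLt (n := n)) := fun _ _ => by
  unfold idxLt; infer_instance

/-- The integer `c_{ab,ij} = δ_{ai} − δ_{aj} − δ_{bi} + δ_{bj}`. -/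
def cc {n : ℕ} (x y : Idx n) : ℤ :=
  (if x.1.1 = y.1.1 then 1 else 0) - (if x.1.1 = y.1.2 then 1 else 0)
    - (if x.1.2 = y.1.1 then 1 else 0) + (if x.1.2 = y.1.2 then 1 else 0)

variable (n : ℕ) (k : Type*) [CommRing k]

/-- The basis element `e_x` of the free module `L = (sl_{n+1}^+)_q`. -/
noncomputable def bas (x : Idx n) : Idx n →₀ k := Finsupp.single x 1

/-- The value `δ_{bi} e_{aj} − δ_{ja} e_{ib}` of the classical commutator of matrix
units, as an element of the free module. -/
noncomputable def qcomm (x y : Idx n) : Idx n →₀ k :=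
  (if h : x.1.2 = y.1.1 then
      Finsupp.single ⟨(x.1.1, y.1.2), (x.2.trans_eq h).trans y.2⟩ (1 : k)
    else 0)
  - (if h : y.1.2 = x.1.1 then
      Finsupp.single ⟨(y.1.1, x.1.2), (y.2.trans_eq h).trans x.2⟩ (1 : k)
    else 0)

variable (q : kˣ)

/-- The `q`-bracket `[e_x, e_y]_q` on basis elements. -/
noncomputable def br (x y : Idx n) : Idx n →₀ k :=
  if idxLt x y then qcomm n k x y
  else if x = y then 0
  else (-((q ^ cc y x : kˣ) : k)) • qcomm n k y x

/-- The scalar `q(x,y)`. -/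
noncomputable def qs (x y : Idx n) : k :=
  if idxLt x y then ((q ^ cc x y : kˣ) : k)
  else if x = y then 1
  else ((q ^ (-cc y x) : kˣ) : k)

/-- The `k`-bilinear extension of the `q`-bracket to `L = (sl_{n+1}^+)_q`. -/
noncomputable def brL : (Idx n →₀ k) →ₗ[k] (Idx n →₀ k) →ₗ[k] (Idx n →₀ k) :=
  Finsupp.lsum k fun x =>
    LinearMap.toSpanSingleton k ((Idx n →₀ k) →ₗ[k] (Idx n →₀ k))
      (Finsupp.lsum k fun y =>
        LinearMap.toSpanSingleton k (Idx n →₀ k) (br n k q x y))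

/-- Helper instance: the (canonical) zero of a tensor product, extracted from its
additive monoid structure.  This is definitionally the usual zero; it is only needed
to help elaboration. -/
noncomputable instance tensorZero {R : Type*} [CommRing R] {M N : Type*}
    [AddCommMonoid M] [AddCommMonoid N] [Module R M] [Module R N] :
    Zero (M ⊗[R] N) :=
  (inferInstance : AddCommMonoid (M ⊗[R] N)).toZero

/-- The value of the pseudobracket `⟨e_{ab}, e_{ij}⟩` for `e_{ab} < e_{ij}`:
`(q − q⁻¹) e_{ib} ⊗ e_{aj}` if `a < i < b` and `i < b < j`, and `0` otherwise. -/
noncomputable def pbv (x y : Idx n) : (Idx n →₀ k) ⊗[k] (Idx n →₀ k) :=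
  if h : x.1.1 < y.1.1 ∧ y.1.1 < x.1.2 ∧ x.1.2 < y.1.2 then
    ((q : k) - ((q⁻¹ : kˣ) : k)) •
      (Finsupp.single (⟨(y.1.1, x.1.2), h.2.1⟩ : Idx n) (1 : k) ⊗ₜ[k]
        Finsupp.single (⟨(x.1.1, y.1.2), (h.1.trans h.2.1).trans h.2.2⟩ : Idx n) (1 : k))
  else 0

/-- The pseudobracket `⟨x, y⟩` on basis elements. -/
noncomputable def pb (x y : Idx n) : (Idx n →₀ k) ⊗[k] (Idx n →₀ k) :=
  if idxLt x y then pbv n k q x y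
  else if x = y then 0
  else (-((q ^ (-cc y x) : kˣ) : k)) • pbv n k q y x

/-- The `k`-bilinear extension of the pseudobracket. -/
noncomputable def pbL :
    (Idx n →₀ k) →ₗ[k] (Idx n →₀ k) →ₗ[k] ((Idx n →₀ k) ⊗[k] (Idx n →₀ k)) :=
  Finsupp.lsum k fun x =>
    LinearMap.toSpanSingleton k
      ((Idx n →₀ k) →ₗ[k] ((Idx n →₀ k) ⊗[k] (Idx n →₀ k)))
      (Finsupp.lsum k fun y =>
        LinearMap.toSpanSingleton k ((Idx n →₀ k) ⊗[k] (Idx n →₀ k)) (pb n k q x y))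

/-- Antisymmetry axiom `[,]∘⟨,⟩ = 0` for `(sl_{n+1}^+)_q`: for all indices
`a < i < b < j`, the `q`-bracket `[e_{ib}, e_{aj}]_q` vanishes; consequently the
composite of the pseudobracket with the `q`-bracket is the zero map. -/

lemma qcomm_zero {n : ℕ} {k : Type*} [CommRing k] (x y : Idx n)
    (h1 : x.1.2 ≠ y.1.1) (h2 : y.1.2 ≠ x.1.1) : qcomm n k x y = 0 := by
  simp [qcomm, h1, h2]

lemma br_zero {n : ℕ} {k : Type*} [CommRing k] (q : kˣ) (x y : Idx n)
    (h1 : x.1.2 ≠ y.1.1) (h2 : y.1.2 ≠ x.1.1) : br n k q x y = 0 := by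
  unfold br
  rw [qcomm_zero x y h1 h2, qcomm_zero y x h2 h1]
  simp

lemma brL_bas {n : ℕ} {k : Type*} [CommRing k] (q : kˣ) (x y : Idx n) :
    brL n k q (bas n k x) (bas n k y) = br n k q x y := by
  simp [brL, bas, Finsupp.lsum_single, LinearMap.toSpanSingleton_apply_one]

lemma lift_brL_pbv {n : ℕ} {k : Type*} [CommRing k] (q : kˣ) (x y : Idx n) :
    TensorProduct.lift (brL n k q) (pbv n k q x y) = 0 := by
  unfold pbv
  split
  case isTrue h =>
    rw [map_smul, TensorProduct.lift.tmul]
    have := brL_bas (k := k) q (⟨(y.1.1, x.1.2), h.2.1⟩ : Idx n)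
      (⟨(x.1.1, y.1.2), (h.1.trans h.2.1).trans h.2.2⟩ : Idx n)
    rw [show (Finsupp.single (⟨(y.1.1, x.1.2), h.2.1⟩ : Idx n) (1 : k)) = bas n k _ from rfl,
        show (Finsupp.single (⟨(x.1.1, y.1.2), (h.1.trans h.2.1).trans h.2.2⟩ : Idx n) (1 : k)) = bas n k _ from rfl,
        this, br_zero]
    · simp
    · exact Fin.ne_of_gt x.2
    · exact Fin.ne_of_gt y.2
  case isFalse => simp

lemma lift_brL_pb {n : ℕ} {k : Type*} [CommRing k] (q : kˣ) (x y : Idx n) :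
    TensorProduct.lift (brL n k q) (pb n k q x y) = 0 := by
  unfold pb
  split
  · exact lift_brL_pbv q x y
  split
  · simp
  · rw [map_smul, lift_brL_pbv, smul_zero]

theorem stmt9 {n : ℕ} (hn : 1 ≤ n) {k : Type*} [CommRing k] (q : kˣ) :
    (∀ a i b j : Fin (n + 1), (hai : a < i) → (hib : i < b) → (hbj : b < j) →
      brL n k q (bas n k ⟨(i, b), hib⟩)
        (bas n k ⟨(a, j), (hai.trans hib).trans hbj⟩) = 0) ∧
    (TensorProduct.lift (brL n k q)) ∘ₗ (TensorProduct.lift (pbL n k q)) = 0 := by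
  
  constructor
  · intro a i b j hai hib hbj
    rw [brL_bas, br_zero]
    · exact Fin.ne_of_gt (hai.trans hib)
    · exact Fin.ne_of_gt (hib.trans hbj)
  · apply TensorProduct.ext'
    intro x y
    simp only [LinearMap.comp_apply, TensorProduct.lift.tmul, LinearMap.zero_apply]
    induction x using Finsupp.induction_linear with
    | zero => simp
    | add f g hf hg => simp [map_add, hf, hg]
    | single a c =>
      induction y using Finsupp.induction_linear with
      | zero => simp
      | add f g hf hg => simp [map_add, hf, hg]
      | single b d =>
        have : (Finsupp.single a c : Idx n →₀ k) = c • bas n k a := by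
          simp [bas, Finsupp.smul_single]
        rw [this, show (Finsupp.single b d : Idx n →₀ k) = d • bas n k b by
          simp [bas, Finsupp.smul_single]]
        simp only [map_smul, LinearMap.smul_apply]
        rw [show pbL n k q (bas n k a) (bas n k b) = pb n k q a b by
          simp [pbL, bas, Finsupp.lsum_single, LinearMap.toSpanSingleton_apply_one]]
        rw [lift_brL_pb]
        simp
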